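/- arXiv:1804.06543 — 5 statements merged into one kernel-verified Lean document; each statement's English description precedes it below -/
import Mathlib

section
/- Fix an integer N ≥ 1, reals S̄ > 0, E_S ∈ ℝ, θ_i > 0 and γ_i > 0 for i = 1,…,N. The feasible set of problem P2.a, namely {(d, E) ∈ ℝᴺ × ℝᴺ : for all i, d_i ≥ θ_i, E_i ≥ 0, d_i·log₂(1 + γ_i E_i / d_i) ≥ S̄, and Σᵢ E_i ≤ E_S}, is a convex subset of ℝᴺ × ℝᴺ. (Lemma 1 of the paper: problem P2 is a convex optimization problem.) -/
open Real Set

lemma key_concave (Sb γ d1 d2 E1 E2 a b : ℝ) (hγ : 0 < γ)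
    (hd1 : 0 < d1) (hd2 : 0 < d2) (hE1 : 0 ≤ E1) (hE2 : 0 ≤ E2)
    (ha : 0 < a) (hb : 0 < b) (hab : a + b = 1)
    (h1 : Sb ≤ d1 * Real.logb 2 (1 + γ * E1 / d1))
    (h2 : Sb ≤ d2 * Real.logb 2 (1 + γ * E2 / d2)) :
    Sb ≤ (a * d1 + b * d2) *
      Real.logb 2 (1 + γ * (a * E1 + b * E2) / (a * d1 + b * d2)) := by
  set d := a * d1 + b * d2 with hd
  have hdpos : 0 < d := by positivity
  have hx1 : (0:ℝ) < 1 + γ * E1 / d1 := by positivity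
  have hx2 : (0:ℝ) < 1 + γ * E2 / d2 := by positivity
  have hw1 : (0:ℝ) < a * d1 / d := by positivity
  have hw2 : (0:ℝ) < b * d2 / d := by positivity
  have hwsum : a * d1 / d + b * d2 / d = 1 := by
    field_simp
    exact hd.symm
  have hconc := (strictConcaveOn_log_Ioi.concaveOn).2 (Set.mem_Ioi.2 hx1)
    (Set.mem_Ioi.2 hx2) hw1.le hw2.le hwsum
  have hcombo : (a * d1 / d) • (1 + γ * E1 / d1) + (b * d2 / d) • (1 + γ * E2 / d2)
      = 1 + γ * (a * E1 + b * E2) / d := by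
    rw [smul_eq_mul, smul_eq_mul]
    field_simp
    try ring
  rw [smul_eq_mul, smul_eq_mul, hcombo] at hconc
  have hlog2 : (0:ℝ) < Real.log 2 := Real.log_pos one_lt_two
  have hmul := mul_le_mul_of_nonneg_left hconc hdpos.le
  have hrw : d * (a * d1 / d * Real.log (1 + γ * E1 / d1) +
      b * d2 / d * Real.log (1 + γ * E2 / d2))
      = a * d1 * Real.log (1 + γ * E1 / d1) + b * d2 * Real.log (1 + γ * E2 / d2) := by
    field_simp
    try ring
  rw [hrw] at hmul
  have hfin : a * (d1 * Real.logb 2 (1 + γ * E1 / d1)) +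
      b * (d2 * Real.logb 2 (1 + γ * E2 / d2))
      ≤ d * Real.logb 2 (1 + γ * (a * E1 + b * E2) / d) := by
    simp only [Real.logb]
    calc a * (d1 * (Real.log (1 + γ * E1 / d1) / Real.log 2)) +
        b * (d2 * (Real.log (1 + γ * E2 / d2) / Real.log 2))
        = (a * d1 * Real.log (1 + γ * E1 / d1) +
           b * d2 * Real.log (1 + γ * E2 / d2)) / Real.log 2 := by ring
      _ ≤ d * Real.log (1 + γ * (a * E1 + b * E2) / d) / Real.log 2 := by
          gcongr
      _ = d * (Real.log (1 + γ * (a * E1 + b * E2) / d) / Real.log 2) := by ring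
  calc Sb = a * Sb + b * Sb := by rw [← add_mul, hab, one_mul]
    _ ≤ a * (d1 * Real.logb 2 (1 + γ * E1 / d1)) +
        b * (d2 * Real.logb 2 (1 + γ * E2 / d2)) := by
        gcongr
    _ ≤ _ := hfin

/-- Lemma 1: the feasible set of problem P2.a is a convex subset of `ℝᴺ × ℝᴺ`. -/
theorem feasible_set_P2a_convex (N : ℕ) (hN : 1 ≤ N) (Sb E_S : ℝ) (hS : 0 < Sb)
    (θ γ : Fin N → ℝ) (hθ : ∀ i, 0 < θ i) (hγ : ∀ i, 0 < γ i) :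
    Convex ℝ {p : (Fin N → ℝ) × (Fin N → ℝ) |
      (∀ i, θ i ≤ p.1 i ∧ 0 ≤ p.2 i ∧
        Sb ≤ p.1 i * Real.logb 2 (1 + γ i * p.2 i / p.1 i)) ∧
      ∑ i, p.2 i ≤ E_S} := by
  rintro x ⟨hx, hxs⟩ y ⟨hy, hys⟩ a b ha hb hab
  have hcoord1 : ∀ i, (a • x + b • y).1 i = a * x.1 i + b * y.1 i := by
    intro i; simp [Prod.smul_fst, Prod.add_def]
  have hcoord2 : ∀ i, (a • x + b • y).2 i = a * x.2 i + b * y.2 i := by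
    intro i; simp [Prod.smul_snd, Prod.add_def]
  constructor
  · intro i
    obtain ⟨hxd, hxE, hxlog⟩ := hx i
    obtain ⟨hyd, hyE, hylog⟩ := hy i
    have hxd' : 0 < x.1 i := lt_of_lt_of_le (hθ i) hxd
    have hyd' : 0 < y.1 i := lt_of_lt_of_le (hθ i) hyd
    refine ⟨?_, ?_, ?_⟩
    · rw [hcoord1]
      calc θ i = a * θ i + b * θ i := by rw [← add_mul, hab, one_mul]
        _ ≤ a * x.1 i + b * y.1 i := by gcongr
    · rw [hcoord2]; positivity
    · rw [hcoord1, hcoord2]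
      rcases ha.eq_or_lt with ha0 | ha0
      · have hb1 : b = 1 := by linarith
        simpa [← ha0, hb1] using hylog
      rcases hb.eq_or_lt with hb0 | hb0
      · have ha1 : a = 1 := by linarith
        simpa [← hb0, ha1] using hxlog
      exact key_concave Sb (γ i) (x.1 i) (y.1 i) (x.2 i) (y.2 i) a b (hγ i)
        hxd' hyd' hxE hyE ha0 hb0 hab hxlog hylog
  · have hsum : ∑ i, (a • x + b • y).2 i = a * ∑ i, x.2 i + b * ∑ i, y.2 i := by
      rw [Finset.sum_congr rfl fun i _ => hcoord2 i]
      rw [Finset.sum_add_distrib, ← Finset.mul_sum, ← Finset.mul_sum]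
    rw [hsum]
    calc a * ∑ i, x.2 i + b * ∑ i, y.2 i ≤ a * E_S + b * E_S := by gcongr
      _ = E_S := by rw [← add_mul, hab, one_mul]
end

section
/- For every S̄ > 0, the minimum-energy function d ↦ d·(2^{S̄/d} − 1) is strictly decreasing on (0, ∞). That is, allocating a longer service time strictly reduces the energy required to deliver a packet of normalized size S̄. -/
open Real Set

lemma two_rpow_strictConvex : StrictConvexOn ℝ Set.univ (fun x : ℝ => (2 : ℝ) ^ x) := by
  have h2 : (0:ℝ) < 2 := by norm_num
  refine ⟨convex_univ, fun x _ y _ hxy a b ha hb hab => ?_⟩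
  have hlog : Real.log 2 ≠ 0 := by
    have := Real.log_pos (by norm_num : (1:ℝ) < 2); linarith
  have hne : Real.log 2 * x ≠ Real.log 2 * y := fun h => hxy (mul_left_cancel₀ hlog h)
  have key := strictConvexOn_exp.2 (Set.mem_univ (Real.log 2 * x)) (Set.mem_univ (Real.log 2 * y)) hne ha hb hab
  simp only [smul_eq_mul] at key ⊢
  rw [Real.rpow_def_of_pos h2, Real.rpow_def_of_pos h2, Real.rpow_def_of_pos h2]
  convert key using 2 <;> ring

lemma slope_lt {x y : ℝ} (hx : 0 < x) (hxy : x < y) :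
    ((2 : ℝ) ^ x - 1) / x < ((2 : ℝ) ^ y - 1) / y := by
  have := two_rpow_strictConvex.secant_strict_mono (a := 0) (x := x) (y := y)
    (Set.mem_univ _) (Set.mem_univ _) (Set.mem_univ _) hx.ne' (hx.trans hxy).ne' hxy
  simpa using this

/-- For every `S̄ > 0`, the minimum-energy function `d ↦ d·(2^{S̄/d} − 1)` is
strictly decreasing on `(0, ∞)`. -/
theorem min_energy_strictAntiOn (Sb : ℝ) (hS : 0 < Sb) :
    StrictAntiOn (fun d : ℝ => d * ((2 : ℝ) ^ (Sb / d) - 1)) (Set.Ioi 0) := by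
  intro a ha b hb hab
  simp only [Set.mem_Ioi] at ha hb
  have hsb : Sb / b < Sb / a := div_lt_div_of_pos_left hS ha hab
  have hsbpos : 0 < Sb / b := div_pos hS hb
  have key := slope_lt hsbpos hsb
  have ea : a * ((2 : ℝ) ^ (Sb / a) - 1) = Sb * (((2 : ℝ) ^ (Sb / a) - 1) / (Sb / a)) := by
    field_simp
  have eb : b * ((2 : ℝ) ^ (Sb / b) - 1) = Sb * (((2 : ℝ) ^ (Sb / b) - 1) / (Sb / b)) := by
    field_simp
  simp only [ea, eb]
  exact mul_lt_mul_of_pos_left key hS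
end

section
/- (Per-coordinate core of Lemma 3.) Fix reals c > 0, λ > 0, γ > 0, S̄ > 0 and θ > 0, and let x* > 0 be the unique solution of 2^{x}·(ln(2)·x − 1) + 1 = cγ/λ. Then the function h(d) = c·d + (λ/γ)·d·(2^{S̄/d} − 1) attains its minimum over [θ, ∞) at d* = max{θ, S̄/x*}; that is, h(d) ≥ h(d*) for all d ≥ θ. -/
open Real Set

/-- derivative of g(u) = 2^u (ln2 u - 1) + 1 -/
lemma hasDerivAt_g (u : ℝ) :
    HasDerivAt (fun u : ℝ => (2:ℝ) ^ u * (Real.log 2 * u - 1) + 1)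
      (Real.log 2 ^ 2 * u * (2:ℝ) ^ u) u := by
  have h1 : HasDerivAt (fun u : ℝ => (2:ℝ) ^ u) ((2:ℝ) ^ u * Real.log 2) u :=
    (Real.hasStrictDerivAt_const_rpow (by norm_num) u).hasDerivAt
  have h2 : HasDerivAt (fun u : ℝ => Real.log 2 * u - 1) (Real.log 2) u := by
    simpa using ((hasDerivAt_id u).const_mul (Real.log 2)).sub_const 1
  have := (h1.mul h2).add_const 1
  refine this.congr_deriv ?_
  ring

lemma g_strictMono : StrictMonoOn (fun u : ℝ => (2:ℝ) ^ u * (Real.log 2 * u - 1) + 1) (Ici 0) := by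
  apply strictMonoOn_of_deriv_pos (convex_Ici 0)
  · exact fun u _ => (hasDerivAt_g u).continuousAt.continuousWithinAt
  · intro u hu
    rw [interior_Ici] at hu
    rw [(hasDerivAt_g u).deriv]
    have h2 : (0:ℝ) < (2:ℝ) ^ u := Real.rpow_pos_of_pos (by norm_num) u
    have hl : (0:ℝ) < Real.log 2 := Real.log_pos (by norm_num)
    exact mul_pos (mul_pos (pow_pos hl 2) hu) h2

lemma hasDerivAt_h (c k Sb : ℝ) {d : ℝ} (hd : 0 < d) :
    HasDerivAt (fun d : ℝ => c * d + k * (d * ((2:ℝ) ^ (Sb / d) - 1)))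
      (c - k * ((2:ℝ) ^ (Sb / d) * (Real.log 2 * (Sb / d) - 1) + 1)) d := by
  have q : HasDerivAt (fun d : ℝ => Sb / d) (Sb * (-(d ^ 2)⁻¹)) d := by
    simpa [div_eq_mul_inv] using (hasDerivAt_inv hd.ne').const_mul Sb
  have e : HasDerivAt (fun d : ℝ => (2:ℝ) ^ (Sb / d))
      ((2:ℝ) ^ (Sb / d) * Real.log 2 * (Sb * (-(d ^ 2)⁻¹))) d :=
    (Real.hasStrictDerivAt_const_rpow (by norm_num) (Sb / d)).hasDerivAt.comp d q
  have m := ((hasDerivAt_id d).mul (e.sub_const 1)).const_mul k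
  have := (((hasDerivAt_id d).const_mul c)).add m
  refine this.congr_deriv ?_
  simp only [id_eq]; field_simp
  ring

/-- Per-coordinate core of Lemma 3: for `c, λ, γ, S̄, θ > 0` and `x* > 0` the unique
root of `2^x·(ln(2)·x − 1) + 1 = cγ/λ`, the function
`h(d) = c·d + (λ/γ)·d·(2^{S̄/d} − 1)` attains its minimum over `[θ, ∞)` at
`d* = max{θ, S̄/x*}`. -/
theorem lagrangian_coordinate_min (c lam γ Sb θ x : ℝ) (hc : 0 < c) (hlam : 0 < lam)
    (hγ : 0 < γ) (hS : 0 < Sb) (hθ : 0 < θ) (hx : 0 < x)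
    (hroot : (2 : ℝ) ^ x * (Real.log 2 * x - 1) + 1 = c * γ / lam) :
    ∀ d : ℝ, θ ≤ d →
      c * max θ (Sb / x) +
          (lam / γ) * (max θ (Sb / x) * ((2 : ℝ) ^ (Sb / max θ (Sb / x)) - 1)) ≤
        c * d + (lam / γ) * (d * ((2 : ℝ) ^ (Sb / d) - 1)) := by
  intro d hd
  set k := lam / γ with hk
  have hk0 : 0 < k := div_pos hlam hγ
  set g : ℝ → ℝ := fun u => (2:ℝ) ^ u * (Real.log 2 * u - 1) + 1 with hg
  set h : ℝ → ℝ := fun d => c * d + k * (d * ((2:ℝ) ^ (Sb / d) - 1)) with hhdef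
  have hkg : k * g x = c := by
    rw [hg]; simp only; rw [hroot]
    rw [hk]; field_simp
  set ds := max θ (Sb / x) with hds
  have hds0 : 0 < ds := lt_of_lt_of_le hθ (le_max_left _ _)
  show h ds ≤ h d
  -- derivative sign helper
  have hderiv : ∀ t : ℝ, 0 < t → deriv h t = k * (g x - g (Sb / t)) := by
    intro t ht
    rw [(hasDerivAt_h c k Sb ht).deriv]
    rw [← hkg]; ring
  have gmono := g_strictMono.monotoneOn
  have hdpos : 0 < d := lt_of_lt_of_le hθ hd
  rcases le_or_gt ds d with hcase | hcase
  · -- monotone on Ici ds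
    have mono : MonotoneOn h (Ici ds) := by
      apply monotoneOn_of_deriv_nonneg (convex_Ici ds)
      · exact fun t ht => (hasDerivAt_h c k Sb (lt_of_lt_of_le hds0 ht)).continuousAt.continuousWithinAt
      · intro t ht
        rw [interior_Ici] at ht
        exact (hasDerivAt_h c k Sb (hds0.trans ht)).differentiableAt.differentiableWithinAt
      · intro t ht
        rw [interior_Ici] at ht
        have ht0 : 0 < t := hds0.trans ht
        rw [hderiv t ht0]
        have h1 : Sb / t ≤ x := by
          rw [div_le_iff₀ ht0]
          have : Sb / x ≤ t := le_of_lt (lt_of_le_of_lt (le_max_right θ _) ht)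
          calc Sb = (Sb / x) * x := by field_simp
            _ ≤ x * t := by nlinarith
        have := gmono (le_of_lt (by positivity : (0:ℝ) < Sb / t)) (le_of_lt hx) h1
        nlinarith
    exact mono (self_mem_Ici) hcase hcase
  · -- d < ds, so ds = Sb / x and θ ≤ Sb / x
    have hθx : θ ≤ Sb / x := by
      by_contra hcon
      push_neg at hcon
      rw [hds, max_eq_left (le_of_lt hcon)] at hcase
      exact absurd hd (not_le.mpr hcase)
    have hdsx : ds = Sb / x := by rw [hds, max_eq_right hθx]
    have anti : AntitoneOn h (Icc θ (Sb / x)) := by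
      apply antitoneOn_of_deriv_nonpos (convex_Icc _ _)
      · exact fun t ht => (hasDerivAt_h c k Sb (lt_of_lt_of_le hθ ht.1)).continuousAt.continuousWithinAt
      · intro t ht
        rw [interior_Icc] at ht
        exact (hasDerivAt_h c k Sb (hθ.trans ht.1)).differentiableAt.differentiableWithinAt
      · intro t ht
        rw [interior_Icc] at ht
        have ht0 : 0 < t := hθ.trans ht.1
        rw [hderiv t ht0]
        have h1 : x ≤ Sb / t := by
          rw [le_div_iff₀ ht0]
          have : t < Sb / x := ht.2
          calc x * t = t * x := by ring
            _ ≤ (Sb / x) * x := by nlinarith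
            _ = Sb := by field_simp
        have := gmono (le_of_lt hx) (le_of_lt (lt_of_lt_of_le hx h1)) h1
        nlinarith
    rw [hdsx]
    exact anti ⟨hd, le_of_lt (hdsx ▸ hcase)⟩ ⟨hθx, le_refl _⟩ (le_of_lt (hdsx ▸ hcase))
end

section
/- (Lemma 3.) Fix an integer N ≥ 2, reals λ > 0, S̄ > 0, and for each i = 1,…,N reals θ_i > 0, γ_i > 0, and c_i defined by c_i = 1 if i ∈ {1, N} and c_i = 2 otherwise. Let ψ_i = c_i γ_i / (λ(N−1)) and let x_i* > 0 be the unique solution of 2^{x}·(ln(2)·x − 1) + 1 = ψ_i. Then the Lagrangian L(d) = (1/(N−1))·Σ_{i=1}^{N−1}(d_i + d_{i+1}) + λ·(Σ_{i=1}^{N} (d_i/γ_i)·(2^{S̄/d_i} − 1) − E_S) attains its minimum over the set {d ∈ ℝᴺ : d_i ≥ θ_i for all i} at d_i* = max{θ_i, S̄/x_i*}; that is, L(d) ≥ L(d*) for all d with d_i ≥ θ_i. -/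
noncomputable def hfun (y : ℝ) : ℝ := (2:ℝ)^y * (Real.log 2 * y - 1) + 1

lemma hfun_hasDerivAt (y : ℝ) :
    HasDerivAt hfun ((2:ℝ)^y * (Real.log 2 * Real.log 2 * y)) y := by
  have h1 : HasDerivAt (fun y : ℝ => (2:ℝ)^y) ((2:ℝ)^y * Real.log 2) y :=
    (Real.hasStrictDerivAt_const_rpow (by norm_num) y).hasDerivAt
  have h2 : HasDerivAt (fun y : ℝ => Real.log 2 * y - 1) (Real.log 2) y := by
    simpa using ((hasDerivAt_id y).const_mul (Real.log 2)).sub_const 1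
  have h3 := (h1.mul h2).add_const 1
  refine h3.congr_deriv ?_
  ring

lemma hfun_mono : MonotoneOn hfun (Set.Ici (0:ℝ)) := by
  apply monotoneOn_of_hasDerivWithinAt_nonneg
    (f' := fun y => (2:ℝ)^y * (Real.log 2 * Real.log 2 * y)) (convex_Ici 0)
  · exact fun s _ => (hfun_hasDerivAt s).continuousAt.continuousWithinAt
  · exact fun s _ => (hfun_hasDerivAt s).hasDerivWithinAt
  · intro s hs
    rw [interior_Ici] at hs
    have h2 : (0:ℝ) < (2:ℝ)^s := Real.rpow_pos_of_pos (by norm_num) s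
    have hl : (0:ℝ) ≤ Real.log 2 := Real.log_nonneg (by norm_num)
    exact mul_nonneg h2.le (mul_nonneg (mul_nonneg hl hl) (le_of_lt hs))

noncomputable def ffun (a b Sb t : ℝ) : ℝ := a * t + b * (t * ((2:ℝ)^(Sb/t) - 1))

lemma ffun_hasDerivAt (a b Sb : ℝ) {t : ℝ} (ht : t ≠ 0) :
    HasDerivAt (ffun a b Sb) (a - b * hfun (Sb / t)) t := by
  have hq : HasDerivAt (fun t : ℝ => Sb / t) (Sb * (-(t^2)⁻¹)) t := by
    simpa [div_eq_mul_inv] using (hasDerivAt_inv ht).const_mul Sb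
  have h1 : HasDerivAt (fun t : ℝ => (2:ℝ)^(Sb/t) - 1)
      ((2:ℝ)^(Sb/t) * Real.log 2 * (Sb * (-(t^2)⁻¹))) t := by
    have := ((Real.hasStrictDerivAt_const_rpow (a := 2) (by norm_num) (Sb/t)).hasDerivAt).comp t hq
    simpa using this.sub_const 1
  have h2 := (hasDerivAt_id t).mul h1
  have h3 := ((hasDerivAt_id t).const_mul a).add (h2.const_mul b)
  refine h3.congr_deriv ?_
  simp only [hfun, id_eq]
  field_simp
  ring

lemma deriv_sign {a b Sb x : ℝ} (hb : 0 < b) (hS : 0 < Sb) (hx : 0 < x)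
    (hroot : hfun x = a / b) {s : ℝ} (hs0 : 0 < s) :
    (Sb / s ≤ x → 0 ≤ a - b * hfun (Sb / s)) ∧ (x ≤ Sb / s → a - b * hfun (Sb / s) ≤ 0) := by
  have hba : b * hfun x = a := by rw [hroot]; field_simp
  constructor
  · intro h1
    have h2 : hfun (Sb / s) ≤ hfun x := hfun_mono (le_of_lt (div_pos hS hs0)) hx.le h1
    nlinarith
  · intro h1
    have h2 : hfun x ≤ hfun (Sb / s) := hfun_mono hx.le (le_of_lt (div_pos hS hs0)) h1
    nlinarith

lemma key {a b Sb tht x t : ℝ} (hb : 0 < b) (hS : 0 < Sb) (hth : 0 < tht)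
    (hx : 0 < x) (hroot : hfun x = a / b) (ht : tht ≤ t) :
    ffun a b Sb (max tht (Sb / x)) ≤ ffun a b Sb t := by
  set t0 := Sb / x with ht0def
  have ht0 : 0 < t0 := div_pos hS hx
  by_cases hcase : max tht t0 ≤ t
  · have mono : MonotoneOn (ffun a b Sb) (Set.Ici t0) := by
      apply monotoneOn_of_hasDerivWithinAt_nonneg
        (f' := fun s => a - b * hfun (Sb / s)) (convex_Ici t0)
      · intro s hs
        have : 0 < s := lt_of_lt_of_le ht0 hs
        exact (ffun_hasDerivAt a b Sb this.ne').continuousAt.continuousWithinAt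
      · intro s hs
        rw [interior_Ici] at hs
        exact (ffun_hasDerivAt a b Sb (lt_trans ht0 hs).ne').hasDerivWithinAt
      · intro s hs
        rw [interior_Ici] at hs
        have hs0 : 0 < s := lt_trans ht0 hs
        refine (deriv_sign hb hS hx hroot hs0).1 ?_
        rw [div_le_iff₀ hs0]
        have : x * t0 = Sb := by rw [ht0def]; field_simp
        nlinarith [mul_le_mul_of_nonneg_left (le_of_lt (show t0 < s from hs)) hx.le]
    exact mono (Set.mem_Ici.mpr (le_max_right tht t0))
      (Set.mem_Ici.mpr (le_trans (le_max_right tht t0) hcase)) hcase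
  · have hlt : t < t0 := by
      by_contra h
      push_neg at h
      exact hcase (max_le ht h)
    have hmax : max tht t0 = t0 := max_eq_right (le_trans ht hlt.le)
    rw [hmax]
    have anti : AntitoneOn (ffun a b Sb) (Set.Icc tht t0) := by
      apply antitoneOn_of_hasDerivWithinAt_nonpos
        (f' := fun s => a - b * hfun (Sb / s)) (convex_Icc tht t0)
      · intro s hs
        have : 0 < s := lt_of_lt_of_le hth hs.1
        exact (ffun_hasDerivAt a b Sb this.ne').continuousAt.continuousWithinAt
      · intro s hs
        rw [interior_Icc] at hs
        exact (ffun_hasDerivAt a b Sb (lt_trans hth hs.1).ne').hasDerivWithinAt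
      · intro s hs
        rw [interior_Icc] at hs
        have hs0 : 0 < s := lt_trans hth hs.1
        refine (deriv_sign hb hS hx hroot hs0).2 ?_
        rw [le_div_iff₀ hs0]
        have : x * t0 = Sb := by rw [ht0def]; field_simp
        nlinarith [mul_le_mul_of_nonneg_left (le_of_lt (show s < t0 from hs.2)) hx.le]
    exact anti (Set.mem_Icc.mpr ⟨ht, hlt.le⟩)
      (Set.mem_Icc.mpr ⟨le_trans ht hlt.le, le_rfl⟩) hlt.le

lemma sum_pair (N : ℕ) (hN : 2 ≤ N) (e : ℕ → ℝ) :
    ∑ i ∈ Finset.range (N - 1), (e i + e (i + 1)) =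
      ∑ i ∈ Finset.range N, (if i = 0 ∨ i = N - 1 then (1:ℝ) else 2) * e i := by
  have hN1 : N - 1 + 1 = N := by omega
  have A : ∑ i ∈ Finset.range N, e i = ∑ i ∈ Finset.range (N - 1), e i + e (N - 1) := by
    conv_lhs => rw [← hN1]
    rw [Finset.sum_range_succ]
  have B : ∑ i ∈ Finset.range N, e i = ∑ i ∈ Finset.range (N - 1), e (i + 1) + e 0 := by
    conv_lhs => rw [← hN1]
    rw [Finset.sum_range_succ']
  have C : ∑ i ∈ Finset.range N, (if i = 0 ∨ i = N - 1 then (1:ℝ) else 2) * e i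
      = ∑ i ∈ Finset.range N,
          (2 * e i - ((if i = 0 then e i else 0) + (if i = N - 1 then e i else 0))) := by
    refine Finset.sum_congr rfl fun i _ => ?_
    have hne : (0:ℕ) ≠ N - 1 := by omega
    by_cases h0 : i = 0
    · subst h0
      simp [hne]
      ring
    · by_cases h1 : i = N - 1
      · have h2 : N - 1 ≠ 0 := by omega
        simp [h0, h1, h2]
        ring
      · simp [h0, h1]
  rw [Finset.sum_add_distrib, C, Finset.sum_sub_distrib, Finset.sum_add_distrib, ← Finset.mul_sum]
  rw [Finset.sum_ite_eq' (Finset.range N) 0 e, Finset.sum_ite_eq' (Finset.range N) (N-1) e]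
  have h0m : (0:ℕ) ∈ Finset.range N := Finset.mem_range.mpr (by omega)
  have h1m : N - 1 ∈ Finset.range N := Finset.mem_range.mpr (by omega)
  rw [if_pos h0m, if_pos h1m]
  linarith

/-- Lemma 3: with `cᵢ = 1` for the first and last packet and `cᵢ = 2` otherwise,
`ψᵢ = cᵢγᵢ/(λ(N−1))`, and `xᵢ* > 0` the unique root of `2^x·(ln(2)·x − 1) + 1 = ψᵢ`,
the Lagrangian `L(d)` of P2.a attains its minimum over `{d : dᵢ ≥ θᵢ}` at
`dᵢ* = max{θᵢ, S̄/xᵢ*}` (indices here run `0,…,N−1`). -/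
theorem lemma_three_lagrangian_min (N : ℕ) (hN : 2 ≤ N) (lam Sb E_S : ℝ)
    (hlam : 0 < lam) (hS : 0 < Sb)
    (θ γ x : ℕ → ℝ) (hθ : ∀ i < N, 0 < θ i) (hγ : ∀ i < N, 0 < γ i)
    (hx : ∀ i < N, 0 < x i ∧
      (2 : ℝ) ^ (x i) * (Real.log 2 * x i - 1) + 1 =
        (if i = 0 ∨ i = N - 1 then (1 : ℝ) else 2) * γ i / (lam * ((N : ℝ) - 1))) :
    ∀ d : ℕ → ℝ, (∀ i < N, θ i ≤ d i) →
      (1 / ((N : ℝ) - 1)) *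
          ∑ i ∈ Finset.range (N - 1),
            (max (θ i) (Sb / x i) + max (θ (i + 1)) (Sb / x (i + 1))) +
        lam * (∑ i ∈ Finset.range N,
            (max (θ i) (Sb / x i) / γ i) *
              ((2 : ℝ) ^ (Sb / max (θ i) (Sb / x i)) - 1) - E_S) ≤
      (1 / ((N : ℝ) - 1)) * ∑ i ∈ Finset.range (N - 1), (d i + d (i + 1)) +
        lam * (∑ i ∈ Finset.range N, (d i / γ i) * ((2 : ℝ) ^ (Sb / d i) - 1) - E_S) := by
  intro d hd
  have hN' : (1:ℝ) ≤ (N:ℝ) - 1 := by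
    have : (2:ℝ) ≤ (N:ℝ) := by exact_mod_cast hN
    linarith
  have hN0 : (0:ℝ) < (N:ℝ) - 1 := by linarith
  set c : ℕ → ℝ := fun i => if i = 0 ∨ i = N - 1 then (1:ℝ) else 2 with hc
  -- per-index inequality
  have main : ∀ i ∈ Finset.range N,
      (1 / ((N:ℝ) - 1)) * (c i * max (θ i) (Sb / x i)) +
        lam * ((max (θ i) (Sb / x i) / γ i) * ((2:ℝ) ^ (Sb / max (θ i) (Sb / x i)) - 1)) ≤
      (1 / ((N:ℝ) - 1)) * (c i * d i) +
        lam * ((d i / γ i) * ((2:ℝ) ^ (Sb / d i) - 1)) := by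
    intro i hi
    rw [Finset.mem_range] at hi
    have hγi := hγ i hi
    have hθi := hθ i hi
    obtain ⟨hxi, hrooti⟩ := hx i hi
    have hci : 0 < c i := by
      by_cases h : i = 0 ∨ i = N - 1 <;> simp [hc, h]
    have hb : 0 < lam / γ i := div_pos hlam hγi
    have hroot : hfun (x i) = (c i / ((N:ℝ) - 1)) / (lam / γ i) := by
      rw [hfun, hrooti, hc]
      field_simp
    have hk := key (a := c i / ((N:ℝ) - 1)) hb hS hθi hxi hroot (hd i hi)
    simp only [ffun] at hk
    have E : ∀ t X : ℝ, (c i / ((N:ℝ) - 1)) * t + (lam / γ i) * (t * X)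
        = (1 / ((N:ℝ) - 1)) * (c i * t) + lam * ((t / γ i) * X) := by
      intro t X
      ring
    rw [E, E] at hk
    exact hk
  have S1 := Finset.sum_le_sum main
  have expand : ∀ e : ℕ → ℝ,
      ∑ i ∈ Finset.range N, ((1 / ((N:ℝ) - 1)) * (c i * e i) +
          lam * ((e i / γ i) * ((2:ℝ) ^ (Sb / e i) - 1)))
        = (1 / ((N:ℝ) - 1)) * ∑ i ∈ Finset.range N, c i * e i +
          lam * ∑ i ∈ Finset.range N, (e i / γ i) * ((2:ℝ) ^ (Sb / e i) - 1) := by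
    intro e
    rw [Finset.sum_add_distrib, ← Finset.mul_sum, ← Finset.mul_sum]
  rw [expand (fun i => max (θ i) (Sb / x i)), expand d] at S1
  rw [sum_pair N hN (fun i => max (θ i) (Sb / x i)), sum_pair N hN d]
  rw [mul_sub, mul_sub]
  exact le_of_sub_nonneg (by linarith)
end

section
/- (First-order global lower bound used in problem P3.) For all reals a > 0, b > 0 and all u, u₀ ≥ 0: log₂(1 + a/(b + u)) ≥ log₂(1 + a/(b + u₀)) − [a·log₂(e) / ((b + u₀)·(a + b + u₀))]·(u − u₀). Equivalently, with a = νE/(Γσ²·d) (up to scaling by d), b = h², u = ‖q − L‖², u₀ = ‖qⁿ − L‖², the throughput satisfies R(q) ≥ R^{lb}(q) := C₁ⁿ − C₂ⁿ·(‖q − L‖² − ‖qⁿ − L‖²), where C₃ⁿ = h² + ‖qⁿ − L‖², C₁ⁿ = d·log₂(1 + νE/(Γσ²·C₃ⁿ·d)), and C₂ⁿ = ν·log₂(e)·d·E / (C₃ⁿ·(Γσ²·C₃ⁿ·d + νE)). -/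
theorem aux_taylor (a b u u₀ : ℝ) (ha : 0 < a) (hb : 0 < b)
    (hu : 0 ≤ u) (hu₀ : 0 ≤ u₀) :
    Real.logb 2 (1 + a / (b + u₀)) -
        a * Real.logb 2 (Real.exp 1) / ((b + u₀) * (a + b + u₀)) * (u - u₀) ≤
      Real.logb 2 (1 + a / (b + u)) := by
  have hD : (0:ℝ) < b + u := by linarith
  have hD0 : (0:ℝ) < b + u₀ := by linarith
  have hx : (0:ℝ) < 1 + a / (b + u) := by positivity
  have hx0 : (0:ℝ) < 1 + a / (b + u₀) := by positivity
  have hL2 : (0:ℝ) < Real.log 2 := Real.log_pos one_lt_two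
  have key : Real.log (1 + a / (b + u₀)) - Real.log (1 + a / (b + u)) ≤
      a / ((b + u₀) * (a + b + u₀)) * (u - u₀) := by
    have hq : (0:ℝ) < (1 + a / (b + u₀)) / (1 + a / (b + u)) := by positivity
    have h1 := Real.log_le_sub_one_of_pos hq
    rw [Real.log_div (ne_of_gt hx0) (ne_of_gt hx)] at h1
    have h2 : (1 + a / (b + u₀)) / (1 + a / (b + u)) - 1 ≤
        a / ((b + u₀) * (a + b + u₀)) * (u - u₀) := by
      have e1 : (1 + a / (b + u₀)) / (1 + a / (b + u)) =
          ((b + u) * (a + b + u₀)) / ((b + u₀) * (a + b + u)) := by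
        field_simp
        ring
      have e3 : a / ((b + u₀) * (a + b + u₀)) * (u - u₀) =
          (a * (u - u₀)) / ((b + u₀) * (a + b + u₀)) := by ring
      rw [e1, div_sub_one (by positivity), e3,
        div_le_div_iff₀ (by positivity) (by positivity), ← sub_nonneg]
      have := sq_nonneg (u - u₀)
      nlinarith [sq_nonneg (u - u₀), mul_pos ha hD0, mul_nonneg (mul_nonneg ha.le hD0.le) (sq_nonneg (u - u₀))]
    linarith
  rw [Real.logb, Real.logb, Real.logb, Real.log_exp]
  have e2 : a * (1 / Real.log 2) / ((b + u₀) * (a + b + u₀)) * (u - u₀) =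
      (a / ((b + u₀) * (a + b + u₀)) * (u - u₀)) / Real.log 2 := by ring
  rw [e2]
  rw [sub_le_iff_le_add, ← add_div, div_le_div_iff₀ hL2 hL2]
  nlinarith [key]

/-- First-order global lower bound used in problem P3: for `a, b > 0` and
`u, u₀ ≥ 0`, `log₂(1 + a/(b + u)) ≥ log₂(1 + a/(b + u₀)) −
[a·log₂(e)/((b + u₀)(a + b + u₀))]·(u − u₀)`; equivalently, the throughput
`R(q)` is globally lower bounded by its first-order Taylor expansion
`R^{lb}(q) = C₁ − C₂·(‖q − L‖² − ‖qⁿ − L‖²)` in the squared distance. -/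
theorem taylor_lower_bound_P3 (a b u u₀ : ℝ) (ha : 0 < a) (hb : 0 < b)
    (hu : 0 ≤ u) (hu₀ : 0 ≤ u₀) :
    (Real.logb 2 (1 + a / (b + u₀)) -
        a * Real.logb 2 (Real.exp 1) / ((b + u₀) * (a + b + u₀)) * (u - u₀) ≤
      Real.logb 2 (1 + a / (b + u))) ∧
    ∀ (ν Γ σ2 h d E : ℝ), 0 < ν → 0 < Γ → 0 < σ2 → 0 < h → 0 < d → 0 < E →
      ∀ (q qn L : EuclideanSpace ℝ (Fin 2)),
        d * Real.logb 2
            (1 + ν * E / (Γ * σ2 * ((h ^ 2 + ‖qn - L‖ ^ 2)) * d)) -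
          ν * Real.logb 2 (Real.exp 1) * d * E /
              ((h ^ 2 + ‖qn - L‖ ^ 2) *
                (Γ * σ2 * (h ^ 2 + ‖qn - L‖ ^ 2) * d + ν * E)) *
            (‖q - L‖ ^ 2 - ‖qn - L‖ ^ 2) ≤
        d * Real.logb 2 (1 + ν * E / (Γ * σ2 * (h ^ 2 + ‖q - L‖ ^ 2) * d)) := by
  refine ⟨aux_taylor a b u u₀ ha hb hu hu₀, ?_⟩
  intro ν Γ σ2 h d E hν hΓ hσ hh hd hE q qn L
  set v : ℝ := ‖q - L‖ ^ 2 with hv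
  set v₀ : ℝ := ‖qn - L‖ ^ 2 with hv₀
  have hvnn : 0 ≤ v := sq_nonneg _
  have hv₀nn : 0 ≤ v₀ := sq_nonneg _
  have hc : (0:ℝ) < Γ * σ2 * d := by positivity
  have hh2 : (0:ℝ) < h ^ 2 := by positivity
  have ha' : (0:ℝ) < ν * E / (Γ * σ2 * d) := by positivity
  have key := aux_taylor (ν * E / (Γ * σ2 * d)) (h ^ 2) v v₀ ha' hh2 hvnn hv₀nn
  have e1 : ν * E / (Γ * σ2 * (h ^ 2 + v₀) * d) =
      ν * E / (Γ * σ2 * d) / (h ^ 2 + v₀) := by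
    rw [div_div]; ring_nf
  have e2 : ν * E / (Γ * σ2 * (h ^ 2 + v) * d) =
      ν * E / (Γ * σ2 * d) / (h ^ 2 + v) := by
    rw [div_div]; ring_nf
  have e3 : ν * Real.logb 2 (Real.exp 1) * d * E /
        ((h ^ 2 + v₀) * (Γ * σ2 * (h ^ 2 + v₀) * d + ν * E)) =
      d * (ν * E / (Γ * σ2 * d) * Real.logb 2 (Real.exp 1) /
        ((h ^ 2 + v₀) * (ν * E / (Γ * σ2 * d) + h ^ 2 + v₀))) := by
    field_simp
    ring
  rw [e1, e2, e3]
  nlinarith [mul_le_mul_of_nonneg_left key hd.le]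
end
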